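/- For a sequence of affine maps on ℝ, g_i(v) = B_i v + C_i with B_i > 0, define G_n(v) = max_{0 ≤ i ≤ n} |g_i(v)|. Then G_n is a convex function of v, and its minimum over ℝ equals the maximum over all pairs (i_1, i_2) with i_1, i_2 ≤ n of min over v of max{|g_{i_1}(v)|, |g_{i_2}(v)|}. -/

import Mathlib

lemma convexOn_abs_affine' (b c : ℝ) : ConvexOn ℝ Set.univ (fun v : ℝ => |b * v + c|) := by
  refine ⟨convex_univ, fun x _ y _ a a2 ha ha2 hab => ?_⟩
  simp only [smul_eq_mul]
  have h2 : a2 = 1 - a := by linarith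
  subst h2
  have h : b * (a * x + (1 - a) * y) + c = a * (b * x + c) + (1 - a) * (b * y + c) := by ring
  rw [h]
  calc |a * (b * x + c) + (1 - a) * (b * y + c)|
      ≤ |a * (b * x + c)| + |(1 - a) * (b * y + c)| := abs_add_le _ _
    _ = a * |b * x + c| + (1 - a) * |b * y + c| := by
        rw [abs_mul, abs_mul, abs_of_nonneg ha, abs_of_nonneg ha2]

lemma convexOn_finset_sup' {ι : Type*} {s : Finset ι} (hs : s.Nonempty) {f : ι → ℝ → ℝ}
    (hf : ∀ i ∈ s, ConvexOn ℝ Set.univ (f i)) :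
    ConvexOn ℝ Set.univ (fun v => s.sup' hs fun i => f i v) := by
  induction hs using Finset.Nonempty.cons_induction with
  | singleton i =>
    have := hf i (Finset.mem_singleton_self i)
    simpa using this
  | cons i s hi hne ih =>
    have h1 := hf i (Finset.mem_cons_self i s)
    have h2 := ih (fun j hj => hf j (Finset.mem_cons_of_mem hj))
    have heq : (fun v => (Finset.cons i s hi).sup' (Finset.cons_nonempty hi) fun j => f j v)
        = fun v => max (f i v) (s.sup' hne fun j => f j v) := by
      funext v
      rw [Finset.sup'_cons hne]
    rw [heq]
    exact h1.sup h2

/-- `G_n(v) = max_{0 ≤ i ≤ n} |B_i v + C_i|` with all slopes positive is convex, and its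
minimum over `ℝ` is the maximum over pairs `(i₁, i₂)` of the min over `v` of the pairwise
maximum `max {|g_{i₁}(v)|, |g_{i₂}(v)|}`. -/
theorem stmt2 (n : ℕ) (B C : ℕ → ℝ) (hB : ∀ i, 0 < B i) :
    ConvexOn ℝ Set.univ (fun v : ℝ => (Finset.range (n + 1)).sup'
      Finset.nonempty_range_add_one fun i => |B i * v + C i|) ∧
    (⨅ v : ℝ, (Finset.range (n + 1)).sup' Finset.nonempty_range_add_one
        fun i => |B i * v + C i|) =
      ((Finset.range (n + 1)) ×ˢ (Finset.range (n + 1))).sup'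
        (Finset.nonempty_range_add_one.product Finset.nonempty_range_add_one)
        fun p => ⨅ v : ℝ, max |B p.1 * v + C p.1| |B p.2 * v + C p.2| := by
  have h0mem : (0 : ℕ) ∈ Finset.range (n + 1) := Finset.mem_range.mpr n.succ_pos
  have hGnonneg : ∀ v : ℝ, (0:ℝ) ≤ (Finset.range (n + 1)).sup'
      Finset.nonempty_range_add_one (fun i => |B i * v + C i|) := fun v =>
    le_trans (abs_nonneg (B 0 * v + C 0))
      (Finset.le_sup' (fun i => |B i * v + C i|) h0mem)
  have hGbdd : BddBelow (Set.range fun v : ℝ => (Finset.range (n + 1)).sup'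
      Finset.nonempty_range_add_one fun i => |B i * v + C i|) :=
    ⟨0, by rintro x ⟨v, rfl⟩; exact hGnonneg v⟩
  constructor
  · exact convexOn_finset_sup' _ (fun i _ => convexOn_abs_affine' (B i) (C i))
  set m : ℝ := ⨅ v : ℝ, (Finset.range (n + 1)).sup' Finset.nonempty_range_add_one
      fun i => |B i * v + C i| with hm
  have hmax_bdd : ∀ i j : ℕ,
      BddBelow (Set.range fun v : ℝ => max |B i * v + C i| |B j * v + C j|) := by
    intro i j
    exact ⟨0, by rintro x ⟨v, rfl⟩; exact le_trans (abs_nonneg _) (le_max_left _ _)⟩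
  have easy : ((Finset.range (n + 1)) ×ˢ (Finset.range (n + 1))).sup'
        (Finset.nonempty_range_add_one.product Finset.nonempty_range_add_one)
        (fun p => ⨅ v : ℝ, max |B p.1 * v + C p.1| |B p.2 * v + C p.2|) ≤ m := by
    apply Finset.sup'_le
    intro p hp
    obtain ⟨h1, h2⟩ := Finset.mem_product.mp hp
    exact ciInf_mono (hmax_bdd p.1 p.2) (fun v =>
      max_le (Finset.le_sup' (fun i => |B i * v + C i|) h1)
        (Finset.le_sup' (fun i => |B i * v + C i|) h2))
  refine le_antisymm ?_ easy
  by_contra hcon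
  push_neg at hcon
  have hmpos : 0 < m := by
    have h00 : ((0 : ℕ), (0 : ℕ)) ∈ (Finset.range (n + 1)) ×ˢ (Finset.range (n + 1)) :=
      Finset.mem_product.mpr ⟨h0mem, h0mem⟩
    have hz : (0:ℝ) ≤ ⨅ v : ℝ, max |B 0 * v + C 0| |B 0 * v + C 0| :=
      le_ciInf fun v => le_trans (abs_nonneg _) (le_max_left _ _)
    have hls := Finset.le_sup'
      (fun p : ℕ × ℕ => ⨅ v : ℝ, max |B p.1 * v + C p.1| |B p.2 * v + C p.2|) h00
    simp only at hls
    calc (0:ℝ) ≤ _ := hz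
      _ ≤ _ := hls
      _ < m := hcon
  have pairwise : ∀ i ∈ Finset.range (n + 1), ∀ j ∈ Finset.range (n + 1),
      ∃ v : ℝ, |B i * v + C i| < m ∧ |B j * v + C j| < m := by
    intro i hi j hj
    have hmem : (i, j) ∈ (Finset.range (n + 1)) ×ˢ (Finset.range (n + 1)) :=
      Finset.mem_product.mpr ⟨hi, hj⟩
    have hls := Finset.le_sup'
      (fun p : ℕ × ℕ => ⨅ v : ℝ, max |B p.1 * v + C p.1| |B p.2 * v + C p.2|) hmem
    simp only at hls
    have h1 : (⨅ v : ℝ, max |B i * v + C i| |B j * v + C j|) < m :=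
      lt_of_le_of_lt hls hcon
    obtain ⟨v, hv⟩ := exists_lt_of_ciInf_lt h1
    exact ⟨v, (max_lt_iff.mp hv).1, (max_lt_iff.mp hv).2⟩
  set a : ℕ → ℝ := fun i => (-m - C i) / B i with ha
  set b : ℕ → ℝ := fun i => (m - C i) / B i with hb
  have hab : ∀ i ∈ Finset.range (n + 1), ∀ j ∈ Finset.range (n + 1), a i < b j := by
    intro i hi j hj
    obtain ⟨v, h1, h2⟩ := pairwise i hi j hj
    have hi' := (abs_lt.mp h1).1
    have hj' := (abs_lt.mp h2).2
    have l1 : a i < v := by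
      rw [ha, div_lt_iff₀ (hB i)]; linarith
    have l2 : v < b j := by
      rw [hb, lt_div_iff₀ (hB j)]; linarith
    linarith
  set A : ℝ := (Finset.range (n + 1)).sup' Finset.nonempty_range_add_one a with hA
  set Bv : ℝ := (Finset.range (n + 1)).inf' Finset.nonempty_range_add_one b with hBv
  have hABv : A < Bv := by
    obtain ⟨i0, hi0, hA0⟩ := Finset.exists_mem_eq_sup' Finset.nonempty_range_add_one a
    obtain ⟨j0, hj0, hB0⟩ := Finset.exists_mem_eq_inf' Finset.nonempty_range_add_one b
    rw [hA, hBv, hA0, hB0]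
    exact hab i0 hi0 j0 hj0
  set w : ℝ := (A + Bv) / 2 with hw
  have hGw : (Finset.range (n + 1)).sup' Finset.nonempty_range_add_one
      (fun i => |B i * w + C i|) < m := by
    rw [Finset.sup'_lt_iff]
    intro i hi
    have l1 : a i < w := by
      have h := Finset.le_sup' a hi
      rw [← hA] at h
      rw [hw]; linarith
    have l2 : w < b i := by
      have h := Finset.inf'_le b hi
      rw [← hBv] at h
      rw [hw]; linarith
    rw [abs_lt]
    constructor
    · rw [ha, div_lt_iff₀ (hB i)] at l1; linarith
    · rw [hb, lt_div_iff₀ (hB i)] at l2; linarith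
  have hle : m ≤ (Finset.range (n + 1)).sup' Finset.nonempty_range_add_one
      (fun i => |B i * w + C i|) := ciInf_le hGbdd w
  linarith
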